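/- If F is a family of subsets of {1,...,n} containing no chain A_1 ⊊ A_2 ⊊ ... ⊊ A_k of k distinct sets, then |F| ≤ Σ(n,k-1), the sum of the k-1 largest binomial coefficients C(n,i). -/

import Mathlib

def middleSum (n m : ℕ) : ℕ := ∑ i ∈ Finset.range m, n.choose ((n - m + 1) / 2 + i)

open Finset

lemma choose_mono_le_half {n a b : ℕ} (hab : a ≤ b) (hb : b ≤ n / 2) :
    n.choose a ≤ n.choose b := by
  induction b, hab using Nat.le_induction with
  | base => exact le_refl _
  | succ b hb' ih =>
    exact (ih (by omega)).trans (Nat.choose_le_succ_of_lt_half_left (by omega))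

lemma choose_le_of_min_le {n a b : ℕ} (hb : b ≤ n)
    (h : min a (n - a) ≤ min b (n - b)) : n.choose a ≤ n.choose b := by
  by_cases ha : a ≤ n
  · have ha' : n.choose a = n.choose (min a (n - a)) := by
      rcases le_total a (n - a) with h1 | h1
      · rw [min_eq_left h1]
      · rw [min_eq_right h1, Nat.choose_symm ha]
    have hb' : n.choose b = n.choose (min b (n - b)) := by
      rcases le_total b (n - b) with h1 | h1
      · rw [min_eq_left h1]
      · rw [min_eq_right h1, Nat.choose_symm hb]
    rw [ha', hb']
    exact choose_mono_le_half h (by omega)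
  · rw [Nat.choose_eq_zero_of_lt (by omega)]; exact Nat.zero_le _

lemma slice_filter {n : ℕ} (F : Finset (Finset (Fin n))) (p : Finset (Fin n) → Prop)
    [DecidablePred p] (r : ℕ) : (F.filter p) # r = (F # r).filter p := by
  ext A; simp [Finset.mem_slice, Finset.mem_filter]; tauto

lemma chain_lym {n : ℕ} (m : ℕ) (F : Finset (Finset (Fin n)))
    (h : ¬ ∃ A : Fin (m + 1) → Finset (Fin n),
      (∀ i, A i ∈ F) ∧ ∀ i j, i < j → A i ⊂ A j) :
    ∑ r ∈ range (n + 1), ((F # r).card : ℚ) / n.choose r ≤ m := by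
  classical
  induction m generalizing F with
  | zero =>
    have hF : F = ∅ := by
      rw [Finset.eq_empty_iff_forall_notMem]
      intro A hA
      exact h ⟨fun _ => A, fun _ => hA, fun i j hij => absurd hij (by omega)⟩
    simp [hF, Finset.slice]
  | succ m ih =>
    set p : Finset (Fin n) → Prop := fun A => ∀ B ∈ F, ¬ A ⊂ B with hp
    set M := F.filter p with hM
    set F' := F.filter (fun A => ¬ p A) with hF'
    have hanti : IsAntichain (· ⊆ ·) (M : Set (Finset (Fin n))) := by
      intro A hA B hB hne hAB
      simp only [hM, Finset.coe_filter, Set.mem_setOf_eq] at hA hB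
      exact hA.2 B hB.1 (ssubset_of_subset_of_ne hAB hne)
    have hchain : ¬ ∃ A : Fin (m + 1) → Finset (Fin n),
        (∀ i, A i ∈ F') ∧ ∀ i j, i < j → A i ⊂ A j := by
      rintro ⟨A, hAmem, hAlt⟩
      have hlast : A (Fin.last m) ∈ F' := hAmem _
      simp only [hF', Finset.mem_filter, hp, not_forall, not_not] at hlast
      obtain ⟨hAF, B, hBF, hAB⟩ := hlast
      refine h ⟨Fin.snoc A B, ?_, ?_⟩
      · intro i
        refine Fin.lastCases ?_ ?_ i
        · rw [Fin.snoc_last]; exact hBF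
        · intro j
          rw [Fin.snoc_castSucc]
          exact Finset.filter_subset _ _ (hAmem j)
      · intro i j hij
        rcases Fin.eq_castSucc_or_eq_last j with ⟨j', rfl⟩ | rfl
        · have hi : i ≠ Fin.last (m + 1) := by
            rintro rfl
            exact absurd (hij.trans_le (Fin.le_last _)) (lt_irrefl _)
          obtain ⟨i', rfl⟩ := Fin.exists_castSucc_eq.2 hi
          rw [Fin.snoc_castSucc, Fin.snoc_castSucc]
          exact hAlt i' j' (by simpa using hij)
        · have hi : i ≠ Fin.last (m + 1) := by
            rintro rfl; exact absurd hij (lt_irrefl _)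
          obtain ⟨i', rfl⟩ := Fin.exists_castSucc_eq.2 hi
          rw [Fin.snoc_last, Fin.snoc_castSucc]
          by_cases hi' : i' = Fin.last m
          · subst hi'; exact hAB
          · exact (hAlt i' (Fin.last m) (Fin.lt_last_iff_ne_last.2 hi')).trans hAB
    have hsplit : ∀ r, ((F # r).card : ℚ) = ((M # r).card : ℚ) + ((F' # r).card : ℚ) := by
      intro r
      rw [hM, hF', slice_filter, slice_filter]
      norm_cast
      rw [Finset.card_filter_add_card_filter_not]
    have hMlym : ∑ r ∈ range (n + 1), ((M # r).card : ℚ) / n.choose r ≤ 1 := by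
      have := Finset.sum_card_slice_div_choose_le_one (𝕜 := ℚ) hanti
      rwa [Fintype.card_fin] at this
    calc ∑ r ∈ range (n + 1), ((F # r).card : ℚ) / n.choose r
        = ∑ r ∈ range (n + 1), (((M # r).card : ℚ) / n.choose r
            + ((F' # r).card : ℚ) / n.choose r) := by
          refine Finset.sum_congr rfl fun r _ => ?_
          rw [hsplit r, add_div]
      _ = (∑ r ∈ range (n + 1), ((M # r).card : ℚ) / n.choose r)
            + ∑ r ∈ range (n + 1), ((F' # r).card : ℚ) / n.choose r :=
          Finset.sum_add_distrib
      _ ≤ 1 + m := add_le_add hMlym (ih F' hchain)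
      _ = (m + 1 : ℕ) := by push_cast; ring

lemma window_max {n m : ℕ} (hm : 1 ≤ m) (t i : ℕ) (ht : t ∈ range (n + 1))
    (htW : t ∉ Ico ((n - m + 1) / 2) ((n - m + 1) / 2 + m))
    (hi : i ∈ Ico ((n - m + 1) / 2) ((n - m + 1) / 2 + m)) (hin : i ≤ n) :
    n.choose t ≤ n.choose i := by
  rw [Finset.mem_range] at ht
  rw [Finset.mem_Ico] at htW hi
  exact choose_le_of_min_le hin (by omega)

lemma knapsack (n m : ℕ) (hm : 1 ≤ m) (hmn : m ≤ n + 1) (g : ℕ → ℕ)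
    (hg : ∀ i, g i ≤ n.choose i)
    (hsum : ∑ r ∈ range (n + 1), (g r : ℚ) / n.choose r ≤ m) :
    ∑ r ∈ range (n + 1), g r ≤ middleSum n m := by
  classical
  set s := (n - m + 1) / 2 with hs
  have hsub : Ico s (s + m) ⊆ range (n + 1) := by
    intro x hx
    rw [Finset.mem_Ico] at hx
    rw [Finset.mem_range]
    omega
  set W := Ico s (s + m) with hW
  have hpos : ∀ i ∈ range (n + 1), (0 : ℚ) < n.choose i := by
    intro i hi
    rw [Finset.mem_range] at hi
    exact_mod_cast Nat.choose_pos (by omega)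
  have hq01 : ∀ i ∈ range (n + 1), (0 : ℚ) ≤ (g i : ℚ) / n.choose i ∧
      (g i : ℚ) / n.choose i ≤ 1 := by
    intro i hi
    constructor
    · positivity
    · rw [div_le_one (hpos i hi)]
      exact_mod_cast hg i
  -- minimal choose value on the window
  obtain ⟨i0, hi0W, hi0min⟩ : ∃ i0 ∈ W, ∀ i ∈ W, n.choose i0 ≤ n.choose i := by
    have hne : W.Nonempty := ⟨s, by rw [hW, Finset.mem_Ico]; omega⟩
    obtain ⟨i0, hi0, hmin⟩ := Finset.exists_min_image W (n.choose ·) hne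
    exact ⟨i0, hi0, hmin⟩
  have key : ∑ i ∈ range (n + 1) \ W, (g i : ℚ) ≤ ∑ i ∈ W, ((n.choose i : ℚ) - g i) := by
    have c1 : ∑ i ∈ range (n + 1) \ W, (g i : ℚ)
        ≤ ∑ i ∈ range (n + 1) \ W, (n.choose i0 : ℚ) * ((g i : ℚ) / n.choose i) := by
      refine Finset.sum_le_sum fun i hi => ?_
      have hiR := (Finset.mem_sdiff.1 hi).1
      have hiW := (Finset.mem_sdiff.1 hi).2
      have hle : (n.choose i : ℚ) ≤ n.choose i0 := by
        have := window_max hm i i0 hiR hiW hi0W (by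
          have := hsub hi0W; rw [Finset.mem_range] at this; omega)
        exact_mod_cast this
      calc (g i : ℚ) = (n.choose i : ℚ) * ((g i : ℚ) / n.choose i) := by
            rw [mul_div_cancel₀]; exact (hpos i hiR).ne'
        _ ≤ (n.choose i0 : ℚ) * ((g i : ℚ) / n.choose i) :=
            mul_le_mul_of_nonneg_right hle (hq01 i hiR).1
    have c2 : ∑ i ∈ range (n + 1) \ W, (n.choose i0 : ℚ) * ((g i : ℚ) / n.choose i)
        ≤ (n.choose i0 : ℚ) * ∑ i ∈ W, (1 - (g i : ℚ) / n.choose i) := by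
      rw [← Finset.mul_sum]
      refine mul_le_mul_of_nonneg_left ?_ (by positivity)
      have hsplit : ∑ i ∈ range (n + 1) \ W, (g i : ℚ) / n.choose i
          = (∑ i ∈ range (n + 1), (g i : ℚ) / n.choose i)
            - ∑ i ∈ W, (g i : ℚ) / n.choose i := by
        rw [eq_sub_iff_add_eq, Finset.sum_sdiff hsub]
      rw [hsplit, Finset.sum_sub_distrib, Finset.sum_const, hW, Nat.card_Ico]
      have : ((s + m - s : ℕ) : ℚ) = m := by norm_cast; omega
      rw [nsmul_eq_mul, this, mul_one]
      linarith [hsum]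
    have c3 : (n.choose i0 : ℚ) * ∑ i ∈ W, (1 - (g i : ℚ) / n.choose i)
        ≤ ∑ i ∈ W, ((n.choose i : ℚ) - g i) := by
      rw [Finset.mul_sum]
      refine Finset.sum_le_sum fun i hiW => ?_
      have hiR := hsub hiW
      have h1 : (0 : ℚ) ≤ 1 - (g i : ℚ) / n.choose i := by
        linarith [(hq01 i hiR).2]
      have h2 : (n.choose i0 : ℚ) ≤ n.choose i := by exact_mod_cast hi0min i hiW
      calc (n.choose i0 : ℚ) * (1 - (g i : ℚ) / n.choose i)
          ≤ (n.choose i : ℚ) * (1 - (g i : ℚ) / n.choose i) :=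
            mul_le_mul_of_nonneg_right h2 h1
        _ = (n.choose i : ℚ) - g i := by
            rw [mul_sub, mul_one, mul_div_cancel₀]
            exact (hpos i hiR).ne'
    exact c1.trans (c2.trans c3)
  have main : (∑ r ∈ range (n + 1), (g r : ℚ)) ≤ ∑ i ∈ W, (n.choose i : ℚ) := by
    rw [← Finset.sum_sdiff hsub]
    have : ∑ i ∈ W, (g i : ℚ) ≤ ∑ i ∈ W, (g i : ℚ) := le_refl _
    calc (∑ i ∈ range (n+1) \ W, (g i : ℚ)) + ∑ i ∈ W, (g i : ℚ)
        ≤ (∑ i ∈ W, ((n.choose i : ℚ) - g i)) + ∑ i ∈ W, (g i : ℚ) := by linarith [key]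
      _ = ∑ i ∈ W, (n.choose i : ℚ) := by rw [← Finset.sum_add_distrib]; simp
  have hMS : middleSum n m = ∑ i ∈ W, n.choose i := by
    rw [middleSum, hW, Finset.sum_Ico_eq_sum_range]
    simp only [Nat.add_sub_cancel_left]
    rfl
  rw [hMS]
  exact_mod_cast main


/-- Erdős's theorem (1945): a family with no k-chain has size at most the sum of the
k-1 largest binomial coefficients. -/
theorem erdos_theorem (n k : ℕ) (F : Finset (Finset (Fin n)))
    (h : ¬ ∃ A : Fin k → Finset (Fin n),
        (∀ i, A i ∈ F) ∧ ∀ i j : Fin k, i < j → A i ⊂ A j) :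
    F.card ≤ middleSum n (k - 1) := by
  classical
  rcases k with _ | m
  · exact absurd ⟨fun i => i.elim0, fun i => i.elim0, fun i => i.elim0⟩ h
  simp only [Nat.add_sub_cancel]
  rcases Nat.eq_zero_or_pos m with rfl | hm
  · -- no 1-chain: F is empty
    have hF : F = ∅ := by
      rw [Finset.eq_empty_iff_forall_notMem]
      intro A hA
      exact h ⟨fun _ => A, fun _ => hA, fun i j hij => absurd hij (by omega)⟩
    simp [hF, middleSum]
  by_cases hmn : m ≤ n + 1
  · have hsum := chain_lym m F h
    have hcard : F.card = ∑ r ∈ range (n + 1), (F # r).card := by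
      have : range (n + 1) = Finset.Iic n := by
        ext x; simp [Nat.lt_succ_iff]
      rw [this, ← Finset.sum_card_slice (𝒜 := F), Fintype.card_fin]
    have hg : ∀ r, (F # r).card ≤ n.choose r := by
      intro r
      have := Set.Sized.card_le (Finset.sized_slice (𝒜 := F) (r := r))
      rwa [Fintype.card_fin] at this
    rw [hcard]
    exact knapsack n m hm hmn (fun r => (F # r).card) hg hsum
  · -- m > n + 1 : trivial bound by 2^n
    have h2 : F.card ≤ 2 ^ n := by
      have := Finset.card_le_univ F
      rwa [Fintype.card_finset, Fintype.card_fin] at this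
    refine h2.trans ?_
    have : middleSum n m = ∑ i ∈ range m, n.choose i := by
      rw [middleSum]
      have hs : (n - m + 1) / 2 = 0 := by omega
      simp [hs]
    rw [this, ← Nat.sum_range_choose]
    exact Finset.sum_le_sum_of_subset (by
      intro x hx; rw [Finset.mem_range] at *; omega)
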